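/- arXiv:1902.06720 — 2 statements merged into one kernel-verified Lean document; each statement's English description precedes it below -/
import Mathlib

section
/- Let d ≥ 1 and let γ be the standard Gaussian measure on ℝ^d (the law of a vector of d i.i.d. standard normal random variables). For all nonzero x, y ∈ ℝ^d, ∫ max(⟨w,x⟩, 0) · max(⟨w,y⟩, 0) dγ(w) = (1/(2π)) ‖x‖₂ ‖y‖₂ ( sin θ + (π − θ) cos θ ), where θ = arccos( ⟨x,y⟩ / (‖x‖₂ ‖y‖₂) ). -/
set_option maxHeartbeats 1000000

open MeasureTheory

/-- The standard Gaussian measure on `ℝ^d`: the law of `d` i.i.d. standard normals. -/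
noncomputable def stdGaussian (d : ℕ) : Measure (Fin d → ℝ) :=
  Measure.pi fun _ : Fin d => ProbabilityTheory.gaussianReal 0 1

namespace ReluAux

open Real Set Filter ProbabilityTheory
open scoped Topology
open scoped ENNReal NNReal Matrix

/-- The standard normal density as an `ℝ≥0`-valued function. -/
noncomputable def gnn (t : ℝ) : ℝ≥0 := (gaussianPDFReal 0 1 t).toNNReal

lemma gnn_coe (t : ℝ) : (gnn t : ℝ) = (Real.sqrt (2 * π))⁻¹ * Real.exp (-(t ^ 2) / 2) := by
  rw [gnn, Real.coe_toNNReal _ (gaussianPDFReal_nonneg 0 1 t)]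
  unfold ProbabilityTheory.gaussianPDFReal
  norm_num

lemma gnn_continuous : Continuous fun t => gnn t := by
  refine continuous_real_toNNReal.comp ?_
  unfold ProbabilityTheory.gaussianPDFReal
  fun_prop

lemma gaussianReal_eq :
    gaussianReal 0 1 = (volume : Measure ℝ).withDensity (fun t => (gnn t : ℝ≥0∞)) := by
  rw [gaussianReal_of_var_ne_zero 0 one_ne_zero]
  rfl

lemma lintegral_pi_prod : ∀ {n : ℕ} (μ : Fin n → Measure ℝ) [∀ i, SigmaFinite (μ i)]
    (f : Fin n → ℝ → ℝ≥0∞), (∀ i, Measurable (f i)) →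
    ∫⁻ w, ∏ i, f i (w i) ∂Measure.pi μ = ∏ i, ∫⁻ t, f i t ∂μ i := by
  intro n
  induction n with
  | zero => intro μ _ f hf; simp
  | succ n ih =>
    intro μ _ f hf
    have h := measurePreserving_piFinSuccAbove μ 0
    simp only [Fin.zero_succAbove] at h
    have hG : Measurable (fun p : ℝ × (Fin n → ℝ) =>
        f 0 p.1 * ∏ j : Fin n, f (Fin.succ j) (p.2 j)) := by
      refine ((hf 0).comp measurable_fst).mul ?_
      exact Finset.measurable_prod _ fun j _ =>
        (hf _).comp ((measurable_pi_apply j).comp measurable_snd)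
    calc ∫⁻ w, ∏ i, f i (w i) ∂Measure.pi μ
        = ∫⁻ w, (fun p : ℝ × (Fin n → ℝ) => f 0 p.1 * ∏ j : Fin n, f (Fin.succ j) (p.2 j))
            ((MeasurableEquiv.piFinSuccAbove (fun _ : Fin (n+1) => ℝ) 0) w) ∂Measure.pi μ := by
          refine lintegral_congr fun w => ?_
          simp [MeasurableEquiv.piFinSuccAbove, Fin.insertNthEquiv, Fin.prod_univ_succ,
            Fin.zero_succAbove, Fin.tail]
      _ = ∫⁻ p, f 0 p.1 * ∏ j : Fin n, f (Fin.succ j) (p.2 j)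
            ∂((μ 0).prod (Measure.pi fun j => μ (Fin.succ j))) :=
          h.lintegral_comp hG
      _ = (∫⁻ t, f 0 t ∂μ 0) * ∫⁻ p2 : Fin n → ℝ, ∏ j : Fin n, f (Fin.succ j) (p2 j)
            ∂(Measure.pi fun j => μ (Fin.succ j)) :=
          lintegral_prod_mul (f := f 0) (g := fun p2 : Fin n → ℝ => ∏ j : Fin n, f (Fin.succ j) (p2 j))
            ((hf 0).aemeasurable)
            ((Finset.measurable_prod _ fun j _ =>
              (hf _).comp (measurable_pi_apply j)).aemeasurable)
      _ = ∏ i, ∫⁻ t, f i t ∂μ i := by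
          rw [ih (fun j => μ (Fin.succ j)) (fun j => f (Fin.succ j)) (fun j => hf _),
            Fin.prod_univ_succ]

lemma stdGaussian_eq (d : ℕ) :
    stdGaussian d = (volume : Measure (Fin d → ℝ)).withDensity
      (fun w => ((∏ i, gnn (w i) : ℝ≥0) : ℝ≥0∞)) := by
  rw [_root_.stdGaussian]
  simp_rw [gaussianReal_eq]
  refine Measure.pi_eq fun s hs => ?_
  rw [withDensity_apply _ (MeasurableSet.univ_pi hs), ← lintegral_indicator (MeasurableSet.univ_pi hs) _]
  have hind : ∀ w : Fin d → ℝ, (Set.univ.pi s).indicator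
      (fun w => ((∏ i, gnn (w i) : ℝ≥0) : ℝ≥0∞)) w
      = ∏ i, (s i).indicator (fun t => (gnn t : ℝ≥0∞)) (w i) := by
    intro w
    by_cases hw : w ∈ Set.univ.pi s
    · rw [Set.indicator_of_mem hw]
      rw [Set.mem_univ_pi] at hw
      push_cast
      exact Finset.prod_congr rfl fun i _ =>
        (Set.indicator_of_mem (hw i) (fun t => ((gnn t : ℝ≥0∞)))).symm
    · rw [Set.indicator_of_notMem hw]
      rw [Set.mem_univ_pi] at hw
      push_neg at hw
      obtain ⟨j, hj⟩ := hw
      exact (Finset.prod_eq_zero (Finset.mem_univ j)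
        (Set.indicator_of_notMem hj _)).symm
  rw [lintegral_congr hind]
  rw [volume_pi]
  rw [lintegral_pi_prod _ _ (fun i => (gnn_continuous.measurable.coe_nnreal_ennreal).indicator
    (hs i))]
  exact Finset.prod_congr rfl fun i _ => by
    rw [lintegral_indicator (hs i) _, withDensity_apply _ (hs i)]

lemma gnn_prod_eq {d : ℕ} {w v : Fin d → ℝ} (h : ∑ j, (w j) ^ 2 = ∑ j, (v j) ^ 2) :
    (∏ i, gnn (w i)) = ∏ i, gnn (v i) := by
  have key : ∀ u : Fin d → ℝ, ((∏ i, gnn (u i) : ℝ≥0) : ℝ)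
      = ((Real.sqrt (2 * π))⁻¹) ^ d * Real.exp (-(∑ i, (u i) ^ 2) / 2) := by
    intro u
    push_cast
    simp_rw [gnn_coe]
    rw [Finset.prod_mul_distrib, Finset.prod_const, ← Real.exp_sum, Finset.card_univ,
      Fintype.card_fin]
    congr 1
    rw [← Finset.sum_div, Finset.sum_neg_distrib]
  have h1 := key w
  rw [h] at h1
  exact NNReal.coe_injective (h1.trans (key v).symm)

lemma sum_mul_sum_ortho {d : ℕ} {Q : Matrix (Fin d) (Fin d) ℝ}
    (hQ : ∀ i k, (∑ j, Q i j * Q k j) = if i = k then 1 else 0) (a b : Fin d → ℝ) :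
    ∑ j, (∑ i, a i * Q i j) * (∑ k, b k * Q k j) = ∑ i, a i * b i := by
  calc ∑ j, (∑ i, a i * Q i j) * (∑ k, b k * Q k j)
      = ∑ j, ∑ i, ∑ k, (a i * b k) * (Q i j * Q k j) := by
        refine Finset.sum_congr rfl fun j _ => ?_
        rw [Finset.sum_mul_sum]
        exact Finset.sum_congr rfl fun i _ => Finset.sum_congr rfl fun k _ => by ring
    _ = ∑ i, ∑ k, (a i * b k) * ∑ j, Q i j * Q k j := by
        rw [Finset.sum_comm]
        refine Finset.sum_congr rfl fun i _ => ?_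
        rw [Finset.sum_comm]
        exact Finset.sum_congr rfl fun k _ => by rw [← Finset.mul_sum]
    _ = ∑ i, a i * b i := by
        simp_rw [hQ]
        simp [mul_ite, Finset.sum_ite_eq]

lemma integral_rot {d : ℕ} {Q : Matrix (Fin d) (Fin d) ℝ}
    (hQ : ∀ i k, (∑ j, Q i j * Q k j) = if i = k then 1 else 0)
    {g : (Fin d → ℝ) → ℝ} (hg : Continuous g) :
    ∫ w, g w ∂(stdGaussian d) = ∫ v, g (fun j => ∑ i, v i * Q i j) ∂(stdGaussian d) := by
  classical
  have hQmat : Q * Qᵀ = 1 := by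
    ext i k
    simpa [Matrix.mul_apply, Matrix.one_apply] using hQ i k
  have hdet2 : Q.det * Q.det = 1 := by
    have := congrArg Matrix.det hQmat
    rwa [Matrix.det_mul, Matrix.det_transpose, Matrix.det_one] at this
  have habs : |Q.det| = 1 := by nlinarith [abs_nonneg Q.det, abs_mul_abs_self Q.det]
  have hdet_ne : (Qᵀ).det ≠ 0 := by
    rw [Matrix.det_transpose]
    intro h0
    rw [h0] at habs
    simp at habs
  have hmap : Measure.map (Matrix.toLin' Qᵀ) (volume : Measure (Fin d → ℝ)) = volume := by
    rw [Real.map_matrix_volume_pi_eq_smul_volume_pi hdet_ne, Matrix.det_transpose, abs_inv, habs]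
    norm_num
  have hL : ∀ v : Fin d → ℝ, (Matrix.toLin' Qᵀ) v = fun j => ∑ i, v i * Q i j := by
    intro v
    funext j
    simp [Matrix.toLin'_apply, Matrix.mulVec, dotProduct, Matrix.transpose_apply, mul_comm]
  have hDcont : Continuous (fun w : Fin d → ℝ => (∏ i, gnn (w i) : ℝ≥0)) :=
    continuous_finset_prod _ fun i _ => gnn_continuous.comp (continuous_apply i)
  have hDmeas : Measurable (fun w : Fin d → ℝ => (∏ i, gnn (w i) : ℝ≥0)) := hDcont.measurable
  have hLcont : Continuous (Matrix.toLin' (Qᵀ) : (Fin d → ℝ) →ₗ[ℝ] (Fin d → ℝ)) :=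
    LinearMap.continuous_on_pi _
  have hFcont : Continuous (fun w : Fin d → ℝ => (∏ i, gnn (w i) : ℝ≥0) • g w) := hDcont.smul hg
  rw [stdGaussian_eq, integral_withDensity_eq_integral_smul hDmeas,
    integral_withDensity_eq_integral_smul hDmeas]
  calc (∫ w, (∏ i, gnn (w i) : ℝ≥0) • g w ∂(volume : Measure (Fin d → ℝ)))
      = ∫ w, (∏ i, gnn (w i) : ℝ≥0) • g w
          ∂(Measure.map (Matrix.toLin' Qᵀ) (volume : Measure (Fin d → ℝ))) := by rw [hmap]
    _ = ∫ v, (∏ i, gnn ((Matrix.toLin' Qᵀ) v i) : ℝ≥0) • g ((Matrix.toLin' Qᵀ) v)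
          ∂(volume : Measure (Fin d → ℝ)) :=
        integral_map hLcont.measurable.aemeasurable hFcont.aestronglyMeasurable
    _ = ∫ v, (∏ i, gnn (v i) : ℝ≥0) • g (fun j => ∑ i, v i * Q i j)
          ∂(volume : Measure (Fin d → ℝ)) := by
        refine integral_congr_ae (Filter.Eventually.of_forall fun v => ?_)
        beta_reduce
        rw [hL v]
        have h2 : ∑ j, ((fun j => ∑ i, v i * Q i j) j) ^ 2 = ∑ j, (v j) ^ 2 := by
          simp only [pow_two]
          exact sum_mul_sum_ortho hQ v v
        rw [gnn_prod_eq h2]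

lemma map_proj2 {d : ℕ} (i0 i1 : Fin d) (hne : i0 ≠ i1) :
    Measure.map (fun v : Fin d → ℝ => (v i0, v i1)) (stdGaussian d)
      = (gaussianReal 0 1).prod (gaussianReal 0 1) := by
  classical
  have hmeas : Measurable (fun v : Fin d → ℝ => (v i0, v i1)) :=
    (measurable_pi_apply i0).prodMk (measurable_pi_apply i1)
  refine (Measure.prod_eq fun s t hs ht => ?_).symm
  rw [Measure.map_apply hmeas (hs.prod ht)]
  have hpre : (fun v : Fin d → ℝ => (v i0, v i1)) ⁻¹' (s ×ˢ t)
      = Set.univ.pi (fun i => if i = i0 then s else if i = i1 then t else Set.univ) := by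
    ext v
    simp only [Set.mem_preimage, Set.mem_prod, Set.mem_univ_pi]
    constructor
    · rintro ⟨h1, h2⟩ i
      by_cases hi0 : i = i0
      · subst hi0; simpa using h1
      · by_cases hi1 : i = i1
        · subst hi1; simpa [hi0] using h2
        · simp [hi0, hi1]
    · intro h
      constructor
      · have := h i0; simpa using this
      · have := h i1
        rwa [if_neg (Ne.symm hne), if_pos rfl] at this
  rw [hpre, _root_.stdGaussian, Measure.pi_pi]
  have hout : ∀ i ∈ Finset.univ, i ∉ ({i0, i1} : Finset (Fin d)) →
      (gaussianReal 0 1) (if i = i0 then s else if i = i1 then t else Set.univ) = 1 := by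
    intro i _ hi
    simp only [Finset.mem_insert, Finset.mem_singleton] at hi
    push_neg at hi
    rw [if_neg hi.1, if_neg hi.2]
    exact measure_univ
  rw [← Finset.prod_subset (Finset.subset_univ ({i0, i1} : Finset (Fin d))) hout,
    Finset.prod_pair hne, if_pos rfl, if_neg (Ne.symm hne), if_pos rfl]

lemma prod_gauss_withDensity :
    (gaussianReal 0 1).prod (gaussianReal 0 1)
      = ((volume : Measure ℝ).prod volume).withDensity
          (fun p => ((gnn p.1 * gnn p.2 : ℝ≥0) : ℝ≥0∞)) := by
  rw [gaussianReal_eq]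
  refine Measure.prod_eq fun s t hs ht => ?_
  rw [withDensity_apply _ (hs.prod ht), ← Measure.prod_restrict]
  simp_rw [ENNReal.coe_mul]
  rw [lintegral_prod_mul (gnn_continuous.measurable.coe_nnreal_ennreal).aemeasurable
    (gnn_continuous.measurable.coe_nnreal_ennreal).aemeasurable]
  rw [withDensity_apply _ hs, withDensity_apply _ ht]

lemma radial_integral : ∫ r in Ioi (0 : ℝ), r ^ 3 * Real.exp (-(r ^ 2) / 2) = 2 := by
  have hderiv : ∀ r ∈ Ioi (0 : ℝ),
      HasDerivAt (fun r : ℝ => -((r ^ 2 + 2) * Real.exp (-(r ^ 2) / 2)))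
        (r ^ 3 * Real.exp (-(r ^ 2) / 2)) r := by
    intro r _
    have h1 : HasDerivAt (fun r : ℝ => r ^ 2 + 2) (2 * r) r := by
      simpa using (hasDerivAt_pow 2 r).add_const 2
    have h2 : HasDerivAt (fun r : ℝ => -(r ^ 2) / 2) (-r) r := by
      have := ((hasDerivAt_pow 2 r).neg).div_const 2
      simpa using this.congr_deriv (by ring)
    have h3 : HasDerivAt (fun r : ℝ => Real.exp (-(r ^ 2) / 2))
        (Real.exp (-(r ^ 2) / 2) * (-r)) r := (Real.hasDerivAt_exp _).comp r h2
    have h4 := (h1.mul h3).neg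
    refine h4.congr_deriv ?_
    ring
  have hcont : ContinuousWithinAt (fun r : ℝ => -((r ^ 2 + 2) * Real.exp (-(r ^ 2) / 2)))
      (Ici 0) 0 := by
    apply Continuous.continuousWithinAt
    fun_prop
  have hint : IntegrableOn (fun r : ℝ => r ^ 3 * Real.exp (-(r ^ 2) / 2)) (Ioi 0) := by
    have h := integrableOn_rpow_mul_exp_neg_mul_sq (b := (1 : ℝ)/2) (by norm_num)
      (s := 3) (by norm_num)
    refine (integrableOn_congr_fun (fun x hx => ?_) measurableSet_Ioi).mp h
    rw [show (3 : ℝ) = ((3 : ℕ) : ℝ) by norm_num, Real.rpow_natCast]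
    congr 1
    ring_nf
  have hg1 : Tendsto (fun t : ℝ => t * Real.exp (-t)) atTop (𝓝 0) := by
    simpa using tendsto_pow_mul_exp_neg_atTop_nhds_zero 1
  have hsq : Tendsto (fun r : ℝ => r ^ 2 / 2) atTop atTop :=
    (tendsto_pow_atTop two_ne_zero).atTop_div_const (by norm_num)
  have h1 : Tendsto (fun r : ℝ => (r ^ 2 / 2) * Real.exp (-(r ^ 2 / 2))) atTop (𝓝 0) :=
    hg1.comp hsq
  have h2 : Tendsto (fun r : ℝ => Real.exp (-(r ^ 2 / 2))) atTop (𝓝 0) :=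
    Real.tendsto_exp_atBot.comp (tendsto_neg_atTop_atBot.comp hsq)
  have hkey : Tendsto (fun r : ℝ => (r ^ 2 + 2) * Real.exp (-(r ^ 2) / 2)) atTop (𝓝 0) := by
    have h3 := (h1.const_mul 2).add (h2.const_mul 2)
    simp only [mul_zero, add_zero] at h3
    refine h3.congr fun r => ?_
    rw [neg_div]
    ring
  have htend : Tendsto (fun r : ℝ => -((r ^ 2 + 2) * Real.exp (-(r ^ 2) / 2))) atTop (𝓝 0) := by
    simpa using hkey.neg
  rw [integral_Ioi_of_hasDerivAt_of_tendsto hcont hderiv hint htend]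
  norm_num

lemma angular_integral {θ : ℝ} (h0 : 0 ≤ θ) (h1 : θ ≤ π) :
    ∫ a in Ioo (-π) π, max (Real.cos a) 0 * max (Real.cos (a - θ)) 0
      = Real.sin θ / 2 + (π - θ) * Real.cos θ / 2 := by
  have hpi := Real.pi_pos
  have hAcont : Continuous fun a : ℝ => max (Real.cos a) 0 * max (Real.cos (a - θ)) 0 := by
    fun_prop
  have h2 : ∫ a in Ioo (-π) π, max (Real.cos a) 0 * max (Real.cos (a - θ)) 0
      = ∫ a in (-π)..π, max (Real.cos a) 0 * max (Real.cos (a - θ)) 0 := by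
    rw [intervalIntegral.integral_of_le (by linarith), integral_Ioc_eq_integral_Ioo]
  have hb1 : -π ≤ θ - π/2 := by linarith
  have hb2 : θ - π/2 ≤ π/2 := by linarith
  have hb3 : (π/2 : ℝ) ≤ π := by linarith
  have h_left : ∫ a in (-π)..(θ - π/2), max (Real.cos a) 0 * max (Real.cos (a - θ)) 0 = 0 := by
    rw [intervalIntegral.integral_congr (g := fun _ => (0 : ℝ)) ?_, intervalIntegral.integral_const,
      smul_zero]
    rw [Set.uIcc_of_le hb1]
    intro a ha
    obtain ⟨ha1, ha2⟩ := ha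
    beta_reduce
    rcases le_or_gt a (-(π/2)) with hc | hc
    · have : Real.cos a ≤ 0 := by
        rw [← Real.cos_neg]
        exact Real.cos_nonpos_of_pi_div_two_le_of_le (by linarith) (by linarith)
      rw [max_eq_right this, zero_mul]
    · have : Real.cos (a - θ) ≤ 0 := by
        rw [show a - θ = -(θ - a) by ring, Real.cos_neg]
        exact Real.cos_nonpos_of_pi_div_two_le_of_le (by linarith) (by linarith)
      rw [max_eq_right this, mul_zero]
  have h_right : ∫ a in (π/2)..π, max (Real.cos a) 0 * max (Real.cos (a - θ)) 0 = 0 := by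
    rw [intervalIntegral.integral_congr (g := fun _ => (0 : ℝ)) ?_, intervalIntegral.integral_const,
      smul_zero]
    rw [Set.uIcc_of_le hb3]
    intro a ha
    obtain ⟨ha1, ha2⟩ := ha
    beta_reduce
    have : Real.cos a ≤ 0 :=
      Real.cos_nonpos_of_pi_div_two_le_of_le (by linarith) (by linarith)
    rw [max_eq_right this, zero_mul]
  have h_mid : ∫ a in (θ - π/2)..(π/2), max (Real.cos a) 0 * max (Real.cos (a - θ)) 0
      = ∫ a in (θ - π/2)..(π/2), Real.cos a * Real.cos (a - θ) := by
    refine intervalIntegral.integral_congr ?_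
    rw [Set.uIcc_of_le hb2]
    intro a ha
    obtain ⟨ha1, ha2⟩ := ha
    beta_reduce
    have hc1 : 0 ≤ Real.cos a :=
      Real.cos_nonneg_of_mem_Icc ⟨by linarith, by linarith⟩
    have hc2 : 0 ≤ Real.cos (a - θ) :=
      Real.cos_nonneg_of_mem_Icc ⟨by linarith, by linarith⟩
    rw [max_eq_left hc1, max_eq_left hc2]
  have hH : ∀ a : ℝ, HasDerivAt (fun a : ℝ => Real.sin (2*a - θ)/4 + a * Real.cos θ/2)
      (Real.cos a * Real.cos (a - θ)) a := by
    intro a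
    have h1 : HasDerivAt (fun a : ℝ => 2*a - θ) 2 a := by
      simpa using ((hasDerivAt_id a).const_mul 2).sub_const θ
    have h2 : HasDerivAt (fun a : ℝ => Real.sin (2*a - θ)) (Real.cos (2*a - θ) * 2) a :=
      (Real.hasDerivAt_sin _).comp a h1
    have h3 := (h2.div_const 4).add (((hasDerivAt_id a).mul_const (Real.cos θ)).div_const 2)
    refine h3.congr_deriv ?_
    have hc1 : Real.cos (2*a - θ) = Real.cos a * Real.cos (a - θ) - Real.sin a * Real.sin (a - θ) := by
      rw [show 2*a - θ = a + (a - θ) by ring, Real.cos_add]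
    have hc2 : Real.cos θ = Real.cos a * Real.cos (a - θ) + Real.sin a * Real.sin (a - θ) := by
      have := Real.cos_sub a (a - θ)
      rw [sub_sub_cancel] at this
      exact this
    rw [hc1, hc2]
    ring
  have h_calc : ∫ a in (θ - π/2)..(π/2), Real.cos a * Real.cos (a - θ)
      = Real.sin θ / 2 + (π - θ) * Real.cos θ / 2 := by
    rw [intervalIntegral.integral_eq_sub_of_hasDerivAt (fun a _ => hH a)
      ((Real.continuous_cos.mul (by fun_prop)).intervalIntegrable _ _)]
    have e1 : 2*(π/2) - θ = π - θ := by ring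
    have e2 : 2*(θ - π/2) - θ = θ - π := by ring
    rw [e1, e2, Real.sin_pi_sub, show θ - π = -(π - θ) by ring, Real.sin_neg, Real.sin_pi_sub]
    ring
  have hi1 : IntervalIntegrable (fun a : ℝ => max (Real.cos a) 0 * max (Real.cos (a - θ)) 0)
      volume (-π) (θ - π/2) := hAcont.intervalIntegrable _ _
  have hi2 : IntervalIntegrable (fun a : ℝ => max (Real.cos a) 0 * max (Real.cos (a - θ)) 0)
      volume (θ - π/2) π := hAcont.intervalIntegrable _ _
  have hi3 : IntervalIntegrable (fun a : ℝ => max (Real.cos a) 0 * max (Real.cos (a - θ)) 0)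
      volume (θ - π/2) (π/2) := hAcont.intervalIntegrable _ _
  have hi4 : IntervalIntegrable (fun a : ℝ => max (Real.cos a) 0 * max (Real.cos (a - θ)) 0)
      volume (π/2) π := hAcont.intervalIntegrable _ _
  rw [h2, ← intervalIntegral.integral_add_adjacent_intervals hi1 hi2,
    ← intervalIntegral.integral_add_adjacent_intervals hi3 hi4,
    h_left, h_right, h_mid, h_calc]
  ring

lemma key2d {θ : ℝ} (h0 : 0 ≤ θ) (h1 : θ ≤ π) :
    ∫ p : ℝ × ℝ, max p.1 0 * max (Real.cos θ * p.1 + Real.sin θ * p.2) 0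
      ∂((gaussianReal 0 1).prod (gaussianReal 0 1))
      = (Real.sin θ + (π - θ) * Real.cos θ) / (2 * π) := by
  have hpi := Real.pi_pos
  have hDmeas : Measurable fun p : ℝ × ℝ => (gnn p.1 * gnn p.2 : ℝ≥0) :=
    ((gnn_continuous.comp continuous_fst).mul (gnn_continuous.comp continuous_snd)).measurable
  rw [prod_gauss_withDensity, ← Measure.volume_eq_prod,
    integral_withDensity_eq_integral_smul hDmeas, ← integral_comp_polarCoord_symm,
    polarCoord_target]
  have hEq : Set.EqOn
      (fun p : ℝ × ℝ => p.1 • ((gnn (polarCoord.symm p).1 * gnn (polarCoord.symm p).2 : ℝ≥0) •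
        (max (polarCoord.symm p).1 0 *
          max (Real.cos θ * (polarCoord.symm p).1 + Real.sin θ * (polarCoord.symm p).2) 0)))
      (fun p : ℝ × ℝ => ((2*π)⁻¹ * (p.1 ^ 3 * Real.exp (-(p.1 ^ 2) / 2))) *
        (max (Real.cos p.2) 0 * max (Real.cos (p.2 - θ)) 0))
      (Ioi (0:ℝ) ×ˢ Ioo (-π) π) := by
    intro p hp
    obtain ⟨hr, _⟩ := hp
    simp only [polarCoord_symm_apply, NNReal.smul_def, NNReal.coe_mul, smul_eq_mul]
    rw [gnn_coe, gnn_coe]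
    have hr0 : (0:ℝ) ≤ p.1 := le_of_lt hr
    have hsum : (p.1 * Real.cos p.2) ^ 2 + (p.1 * Real.sin p.2) ^ 2 = p.1 ^ 2 := by
      nlinarith [Real.sin_sq_add_cos_sq p.2]
    have hexp : Real.exp (-((p.1 * Real.cos p.2) ^ 2) / 2) *
        Real.exp (-((p.1 * Real.sin p.2) ^ 2) / 2) = Real.exp (-(p.1 ^ 2) / 2) := by
      rw [← Real.exp_add]
      congr 1
      linarith
    have hc : (Real.sqrt (2*π))⁻¹ * (Real.sqrt (2*π))⁻¹ = (2*π)⁻¹ := by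
      rw [← mul_inv, Real.mul_self_sqrt (by positivity)]
    have hmax1 : max (p.1 * Real.cos p.2) 0 = p.1 * max (Real.cos p.2) 0 := by
      rw [mul_max_of_nonneg _ _ hr0, mul_zero]
    have hmax2 : max (Real.cos θ * (p.1 * Real.cos p.2) + Real.sin θ * (p.1 * Real.sin p.2)) 0
        = p.1 * max (Real.cos (p.2 - θ)) 0 := by
      rw [mul_max_of_nonneg _ _ hr0, mul_zero]
      congr 1
      rw [Real.cos_sub]
      ring
    rw [hmax1, hmax2, ← hexp, ← hc]
    ring
  rw [setIntegral_congr_fun (measurableSet_Ioi.prod measurableSet_Ioo) hEq,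
    Measure.volume_eq_prod, ← Measure.prod_restrict,
    integral_prod_mul (μ := volume.restrict (Ioi (0:ℝ))) (ν := volume.restrict (Ioo (-π) π))
      (f := fun r : ℝ => (2*π)⁻¹ * (r ^ 3 * Real.exp (-(r ^ 2) / 2)))
      (g := fun a : ℝ => max (Real.cos a) 0 * max (Real.cos (a - θ)) 0),
    integral_const_mul, radial_integral, angular_integral h0 h1]
  field_simp

lemma exists_good_basis {d : ℕ} (i0 i1 : Fin d) (hne : i0 ≠ i1)
    (xh y r : Fin d → ℝ) (c1 c2 : ℝ)
    (hxhnorm : ∑ j, xh j * xh j = 1)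
    (hxhy : ∑ j, xh j * y j = c1)
    (hr : ∀ j, r j = y j - c1 * xh j)
    (hc2 : c2 = Real.sqrt (∑ j, r j ^ 2)) :
    ∃ b : OrthonormalBasis (Fin d) ℝ (EuclideanSpace ℝ (Fin d)),
      (∀ j, b i0 j = xh j) ∧ (∀ j, y j = c1 * b i0 j + c2 * b i1 j) := by
  classical
  have hcard : Module.finrank ℝ (EuclideanSpace ℝ (Fin d)) = Fintype.card (Fin d) := by
    simp [finrank_euclideanSpace_fin]
  have hinner : ∀ u u' : Fin d → ℝ,
      (inner ℝ ((WithLp.equiv 2 (Fin d → ℝ)).symm u) ((WithLp.equiv 2 (Fin d → ℝ)).symm u') : ℝ)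
        = ∑ j, u j * u' j := by
    intro u u'
    simp [PiLp.inner_apply, RCLike.inner_apply, conj_trivial, mul_comm]
  by_cases hr0 : ∀ j, r j = 0
  · -- y is a multiple of xh
    have hc20 : c2 = 0 := by
      rw [hc2, Finset.sum_eq_zero fun j _ => by rw [hr0 j]; ring, Real.sqrt_zero]
    set v : Fin d → EuclideanSpace ℝ (Fin d) := fun i =>
      if i = i0 then (WithLp.equiv 2 (Fin d → ℝ)).symm xh else 0 with hv
    have hvi0 : v i0 = (WithLp.equiv 2 (Fin d → ℝ)).symm xh := by simp [hv]
    have hON : Orthonormal ℝ (({i0} : Set (Fin d)).restrict v) := by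
      rw [orthonormal_iff_ite]
      rintro ⟨p, hp⟩ ⟨q, hq⟩
      simp only [Set.mem_singleton_iff] at hp hq
      simp only [Set.restrict_apply, Subtype.mk.injEq]
      change inner ℝ (v p) (v q) = (if p = q then (1:ℝ) else 0)
      rw [hp, hq, if_pos rfl, hvi0, hinner]
      exact hxhnorm
    obtain ⟨b, hb⟩ := hON.exists_orthonormalBasis_extension_of_card_eq hcard
    have hbi0 : b i0 = (WithLp.equiv 2 (Fin d → ℝ)).symm xh := by
      have := hb i0 (by simp)
      rwa [hvi0] at this
    refine ⟨b, fun j => by rw [hbi0]; rfl, fun j => ?_⟩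
    have hyj : y j = c1 * xh j := by
      have := hr0 j
      rw [hr j] at this
      linarith
    have hbj0 : b i0 j = xh j := by rw [hbi0]; rfl
    rw [hc20, hbj0]
    simpa using hyj
  · push_neg at hr0
    obtain ⟨j0, hj0⟩ := hr0
    have hrsumpos : 0 < ∑ j, r j ^ 2 :=
      Finset.sum_pos' (fun j _ => sq_nonneg _)
        ⟨j0, Finset.mem_univ j0, (sq_nonneg _).lt_of_ne (Ne.symm (pow_ne_zero 2 hj0))⟩
    have hc2pos : 0 < c2 := by rw [hc2]; exact Real.sqrt_pos.mpr hrsumpos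
    have hc2sq : c2 * c2 = ∑ j, r j ^ 2 := by
      rw [hc2]; exact Real.mul_self_sqrt hrsumpos.le
    set rh : Fin d → ℝ := fun j => c2⁻¹ * r j with hrh
    have hrhnorm : ∑ j, rh j * rh j = 1 := by
      have h1 : ∀ j, rh j * rh j = c2⁻¹ * c2⁻¹ * (r j ^ 2) := fun j => by
        simp only [hrh]; ring
      rw [Finset.sum_congr rfl fun j _ => h1 j, ← Finset.mul_sum, ← hc2sq]
      field_simp
    have hxr : ∑ j, xh j * r j = 0 := by
      have h1 : ∀ j, xh j * r j = xh j * y j - c1 * (xh j * xh j) := fun j => by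
        rw [hr j]; ring
      rw [Finset.sum_congr rfl fun j _ => h1 j, Finset.sum_sub_distrib, ← Finset.mul_sum,
        hxhnorm, hxhy]
      ring
    have hxrh : ∑ j, xh j * rh j = 0 := by
      have h1 : ∀ j, xh j * rh j = c2⁻¹ * (xh j * r j) := fun j => by
        simp only [hrh]; ring
      rw [Finset.sum_congr rfl fun j _ => h1 j, ← Finset.mul_sum, hxr, mul_zero]
    set v : Fin d → EuclideanSpace ℝ (Fin d) := fun i =>
      if i = i0 then (WithLp.equiv 2 (Fin d → ℝ)).symm xh
      else if i = i1 then (WithLp.equiv 2 (Fin d → ℝ)).symm rh else 0 with hv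
    have hvi0 : v i0 = (WithLp.equiv 2 (Fin d → ℝ)).symm xh := by simp [hv]
    have hvi1 : v i1 = (WithLp.equiv 2 (Fin d → ℝ)).symm rh := by
      simp only [hv]
      rw [if_neg (Ne.symm hne)]
      simp
    have hON : Orthonormal ℝ (({i0, i1} : Set (Fin d)).restrict v) := by
      rw [orthonormal_iff_ite]
      rintro ⟨p, hp⟩ ⟨q, hq⟩
      simp only [Set.mem_insert_iff, Set.mem_singleton_iff] at hp hq
      simp only [Set.restrict_apply, Subtype.mk.injEq]
      change inner ℝ (v p) (v q) = (if p = q then (1:ℝ) else 0)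
      rcases hp with hp | hp <;> rcases hq with hq | hq <;> rw [hp, hq]
      · rw [if_pos rfl, hvi0, hinner]
        exact hxhnorm
      · rw [if_neg hne, hvi0, hvi1, hinner]
        exact hxrh
      · rw [if_neg (Ne.symm hne), hvi0, hvi1, hinner]
        rw [← hxrh]
        exact Finset.sum_congr rfl fun j _ => mul_comm _ _
      · rw [if_pos rfl, hvi1, hinner]
        exact hrhnorm
    obtain ⟨b, hb⟩ := hON.exists_orthonormalBasis_extension_of_card_eq hcard
    have hbi0 : b i0 = (WithLp.equiv 2 (Fin d → ℝ)).symm xh := by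
      have := hb i0 (by simp)
      rwa [hvi0] at this
    have hbi1 : b i1 = (WithLp.equiv 2 (Fin d → ℝ)).symm rh := by
      have := hb i1 (by simp)
      rwa [hvi1] at this
    refine ⟨b, fun j => by rw [hbi0]; rfl, fun j => ?_⟩
    have hbj0 : b i0 j = xh j := by rw [hbi0]; rfl
    have hbj1 : b i1 j = rh j := by rw [hbi1]; rfl
    rw [hbj0, hbj1, hrh]
    simp only []
    have : c2 * (c2⁻¹ * r j) = r j := by field_simp
    rw [this, hr j]
    ring

lemma mid2 {d : ℕ} (i0 i1 : Fin d) (hne : i0 ≠ i1)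
    (b : OrthonormalBasis (Fin d) ℝ (EuclideanSpace ℝ (Fin d)))
    (x y : Fin d → ℝ) (N1 c1 c2 : ℝ)
    (hxb : ∀ j, x j = N1 * b i0 j) (hyb : ∀ j, y j = c1 * b i0 j + c2 * b i1 j) :
    ∫ w, max (∑ i, w i * x i) 0 * max (∑ i, w i * y i) 0 ∂(stdGaussian d)
      = ∫ p : ℝ × ℝ, max (p.1 * N1) 0 * max (p.1 * c1 + p.2 * c2) 0
          ∂((gaussianReal 0 1).prod (gaussianReal 0 1)) := by
  classical
  set Q : Matrix (Fin d) (Fin d) ℝ := Matrix.of (fun i j => b i j) with hQdef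
  have hQapp : ∀ i j, Q i j = b i j := fun i j => rfl
  have hQ : ∀ i k, (∑ j, Q i j * Q k j) = if i = k then 1 else 0 := by
    intro i k
    have hON := b.orthonormal
    rw [orthonormal_iff_ite] at hON
    have h2 := hON i k
    simp only [PiLp.inner_apply, RCLike.inner_apply, conj_trivial] at h2
    simpa [hQapp, mul_comm] using h2
  have hXcont : Continuous fun w : Fin d → ℝ =>
      max (∑ i, w i * x i) 0 * max (∑ i, w i * y i) 0 := by
    have hsc : ∀ z : Fin d → ℝ, Continuous fun w : Fin d → ℝ => ∑ i, w i * z i := fun z =>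
      continuous_finset_sum _ fun i _ => (continuous_apply i).mul continuous_const
    exact ((hsc x).max continuous_const).mul ((hsc y).max continuous_const)
  rw [integral_rot hQ hXcont]
  have hX : ∀ v : Fin d → ℝ, ∑ j, (∑ i, v i * Q i j) * x j = v i0 * N1 := by
    intro v
    have h1 : ∀ j, x j = ∑ k, (if k = i0 then N1 else 0) * Q k j := by
      intro j
      have : ∑ k, (if k = i0 then N1 else 0) * Q k j = N1 * Q i0 j := by
        rw [Finset.sum_eq_single i0]
        · rw [if_pos rfl]
        · intro k _ hk
          rw [if_neg hk, zero_mul]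
        · intro h
          exact absurd (Finset.mem_univ i0) h
      rw [this, hQapp]
      exact hxb j
    have hrw : ∑ j, (∑ i, v i * Q i j) * x j
        = ∑ j, (∑ i, v i * Q i j) * (∑ k, (if k = i0 then N1 else 0) * Q k j) :=
      Finset.sum_congr rfl fun j _ => by rw [← h1 j]
    rw [hrw, sum_mul_sum_ortho hQ v (fun k => if k = i0 then N1 else 0)]
    simp [mul_ite, mul_zero, Finset.sum_ite_eq']
  have hY : ∀ v : Fin d → ℝ, ∑ j, (∑ i, v i * Q i j) * y j = v i0 * c1 + v i1 * c2 := by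
    intro v
    have h1 : ∀ j, y j = ∑ k, ((if k = i0 then c1 else 0) + (if k = i1 then c2 else 0)) * Q k j := by
      intro j
      have e1 : ∑ k, (if k = i0 then c1 else 0) * Q k j = c1 * Q i0 j := by
        rw [Finset.sum_eq_single i0]
        · rw [if_pos rfl]
        · intro k _ hk
          rw [if_neg hk, zero_mul]
        · intro h
          exact absurd (Finset.mem_univ i0) h
      have e2 : ∑ k, (if k = i1 then c2 else 0) * Q k j = c2 * Q i1 j := by
        rw [Finset.sum_eq_single i1]
        · rw [if_pos rfl]
        · intro k _ hk
          rw [if_neg hk, zero_mul]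
        · intro h
          exact absurd (Finset.mem_univ i1) h
      rw [Finset.sum_congr rfl fun k _ => add_mul _ _ _, Finset.sum_add_distrib, e1, e2,
        hQapp, hQapp]
      exact hyb j
    have hrw : ∑ j, (∑ i, v i * Q i j) * y j
        = ∑ j, (∑ i, v i * Q i j)
            * (∑ k, ((if k = i0 then c1 else 0) + (if k = i1 then c2 else 0)) * Q k j) :=
      Finset.sum_congr rfl fun j _ => by rw [← h1 j]
    rw [hrw, sum_mul_sum_ortho hQ v
      (fun k => (if k = i0 then c1 else 0) + (if k = i1 then c2 else 0))]
    simp [mul_add, Finset.sum_add_distrib, mul_ite, mul_zero, Finset.sum_ite_eq']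
  have hstep : (∫ v, max (∑ j, (∑ i, v i * Q i j) * x j) 0
        * max (∑ j, (∑ i, v i * Q i j) * y j) 0 ∂(stdGaussian d))
      = ∫ v : Fin d → ℝ, (fun p : ℝ × ℝ => max (p.1 * N1) 0 * max (p.1 * c1 + p.2 * c2) 0)
          ((fun v : Fin d → ℝ => (v i0, v i1)) v) ∂(stdGaussian d) := by
    refine integral_congr_ae (Filter.Eventually.of_forall fun v => ?_)
    beta_reduce
    rw [hX v, hY v]
  rw [hstep]
  have hT : Measurable fun v : Fin d → ℝ => (v i0, v i1) :=
    (measurable_pi_apply i0).prodMk (measurable_pi_apply i1)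
  have hGcont : Continuous fun p : ℝ × ℝ => max (p.1 * N1) 0 * max (p.1 * c1 + p.2 * c2) 0 := by
    fun_prop
  have hmapped := integral_map (μ := stdGaussian d) hT.aemeasurable
    (f := fun p : ℝ × ℝ => max (p.1 * N1) 0 * max (p.1 * c1 + p.2 * c2) 0)
    hGcont.aestronglyMeasurable
  rw [map_proj2 i0 i1 hne] at hmapped
  exact hmapped.symm

lemma mid1 (x y : Fin 1 → ℝ) (N1 c1 c2 s : ℝ) (hs : s * s = 1)
    (hxs : s * x 0 = N1) (hys : s * y 0 = c1) (hc2 : c2 = 0) :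
    ∫ w, max (∑ i, w i * x i) 0 * max (∑ i, w i * y i) 0 ∂(stdGaussian 1)
      = ∫ p : ℝ × ℝ, max (p.1 * N1) 0 * max (p.1 * c1 + p.2 * c2) 0
          ∂((gaussianReal 0 1).prod (gaussianReal 0 1)) := by
  classical
  set Q : Matrix (Fin 1) (Fin 1) ℝ := Matrix.of (fun _ _ => s) with hQdef
  have hQapp : ∀ i j : Fin 1, Q i j = s := fun i j => rfl
  have hQ : ∀ i k : Fin 1, (∑ j, Q i j * Q k j) = if i = k then 1 else 0 := by
    intro i k
    have hik : i = k := Subsingleton.elim i k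
    subst hik
    rw [if_pos rfl, Fin.sum_univ_one, hQapp]
    exact hs
  have hXcont : Continuous fun w : Fin 1 → ℝ =>
      max (∑ i, w i * x i) 0 * max (∑ i, w i * y i) 0 := by
    have hsc : ∀ z : Fin 1 → ℝ, Continuous fun w : Fin 1 → ℝ => ∑ i, w i * z i := fun z =>
      continuous_finset_sum _ fun i _ => (continuous_apply i).mul continuous_const
    exact ((hsc x).max continuous_const).mul ((hsc y).max continuous_const)
  rw [integral_rot hQ hXcont]
  have hstep : (∫ v, max (∑ j, (∑ i, v i * Q i j) * x j) 0
        * max (∑ j, (∑ i, v i * Q i j) * y j) 0 ∂(stdGaussian 1))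
      = ∫ v : Fin 1 → ℝ, (fun u : ℝ => max (u * N1) 0 * max (u * c1) 0)
          ((MeasurableEquiv.funUnique (Fin 1) ℝ) v) ∂(stdGaussian 1) := by
    refine integral_congr_ae (Filter.Eventually.of_forall fun v => ?_)
    beta_reduce
    have he : (MeasurableEquiv.funUnique (Fin 1) ℝ) v = v 0 := rfl
    rw [he, Fin.sum_univ_one, Fin.sum_univ_one, Fin.sum_univ_one, Fin.sum_univ_one, hQapp,
      mul_assoc, hxs, mul_assoc, hys]
  rw [hstep]
  have hmp := measurePreserving_funUnique (gaussianReal 0 1) (Fin 1)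
  have hcomp : (∫ v : Fin 1 → ℝ, (fun u : ℝ => max (u * N1) 0 * max (u * c1) 0)
        ((MeasurableEquiv.funUnique (Fin 1) ℝ) v) ∂(stdGaussian 1))
      = ∫ u : ℝ, max (u * N1) 0 * max (u * c1) 0 ∂(gaussianReal 0 1) := by
    rw [show stdGaussian 1 = Measure.pi (fun _ : Fin 1 => gaussianReal 0 1) from rfl]
    exact hmp.integral_comp (MeasurableEquiv.measurableEmbedding _)
      (fun u : ℝ => max (u * N1) 0 * max (u * c1) 0)
  rw [hcomp]
  have hGcont : Continuous fun p : ℝ × ℝ => max (p.1 * N1) 0 * max (p.1 * c1) 0 := by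
    fun_prop
  have hfst : Measure.map Prod.fst ((gaussianReal 0 1).prod (gaussianReal 0 1))
      = gaussianReal 0 1 := by
    rw [Measure.map_fst_prod]
    simp
  have hucont : Continuous fun u : ℝ => max (u * N1) 0 * max (u * c1) 0 := by fun_prop
  have hmapped := integral_map (μ := (gaussianReal 0 1).prod (gaussianReal 0 1))
    measurable_fst.aemeasurable (f := fun u : ℝ => max (u * N1) 0 * max (u * c1) 0)
    hucont.aestronglyMeasurable
  rw [hfst] at hmapped
  refine hmapped.trans (integral_congr_ae (Filter.Eventually.of_forall fun p => ?_))
  beta_reduce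
  rw [hc2]
  ring_nf

end ReluAux

/-- The ReLU (order-1 arc-cosine) kernel: for nonzero `x, y ∈ ℝ^d`,
`∫ max(⟨w,x⟩,0) max(⟨w,y⟩,0) dγ(w) = (1/(2π)) ‖x‖ ‖y‖ (sin θ + (π − θ) cos θ)` where
`θ = arccos(⟨x,y⟩/(‖x‖‖y‖))`. -/
theorem relu_arccosine_kernel (d : ℕ) (hd : 1 ≤ d)
    (x y : Fin d → ℝ) (hx : x ≠ 0) (hy : y ≠ 0) :
    ∫ w, max (∑ i, w i * x i) 0 * max (∑ i, w i * y i) 0 ∂(stdGaussian d) =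
      (1 / (2 * Real.pi)) *
        (Real.sqrt (∑ i, x i ^ 2) * Real.sqrt (∑ i, y i ^ 2)) *
        (Real.sin (Real.arccos ((∑ i, x i * y i) /
            (Real.sqrt (∑ i, x i ^ 2) * Real.sqrt (∑ i, y i ^ 2)))) +
          (Real.pi - Real.arccos ((∑ i, x i * y i) /
            (Real.sqrt (∑ i, x i ^ 2) * Real.sqrt (∑ i, y i ^ 2)))) *
          Real.cos (Real.arccos ((∑ i, x i * y i) /
            (Real.sqrt (∑ i, x i ^ 2) * Real.sqrt (∑ i, y i ^ 2))))) := by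
  classical
  have hpi := Real.pi_pos
  set N1 := Real.sqrt (∑ i, x i ^ 2) with hN1def
  set N2 := Real.sqrt (∑ i, y i ^ 2) with hN2def
  have hx2pos : 0 < ∑ i, x i ^ 2 := by
    obtain ⟨j, hj⟩ := Function.ne_iff.mp hx
    refine Finset.sum_pos' (fun i _ => sq_nonneg _) ⟨j, Finset.mem_univ j, ?_⟩
    have hj' : x j ≠ 0 := hj
    exact (sq_nonneg _).lt_of_ne (Ne.symm (pow_ne_zero 2 hj'))
  have hy2pos : 0 < ∑ i, y i ^ 2 := by
    obtain ⟨j, hj⟩ := Function.ne_iff.mp hy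
    refine Finset.sum_pos' (fun i _ => sq_nonneg _) ⟨j, Finset.mem_univ j, ?_⟩
    have hj' : y j ≠ 0 := hj
    exact (sq_nonneg _).lt_of_ne (Ne.symm (pow_ne_zero 2 hj'))
  have hN1 : 0 < N1 := Real.sqrt_pos.mpr hx2pos
  have hN2 : 0 < N2 := Real.sqrt_pos.mpr hy2pos
  have hN1sq : N1 ^ 2 = ∑ i, x i ^ 2 := Real.sq_sqrt hx2pos.le
  have hN2sq : N2 ^ 2 = ∑ i, y i ^ 2 := Real.sq_sqrt hy2pos.le
  set xh : Fin d → ℝ := fun j => N1⁻¹ * x j with hxh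
  set c1 : ℝ := ∑ j, y j * xh j with hc1
  set r : Fin d → ℝ := fun j => y j - c1 * xh j with hrdef
  set c2 : ℝ := Real.sqrt (∑ j, r j ^ 2) with hc2def
  have hxhx : ∀ j, x j = N1 * xh j := by
    intro j
    simp only [hxh]
    field_simp
  have hxhnorm : ∑ j, xh j * xh j = 1 := by
    have h1 : ∀ j, xh j * xh j = N1⁻¹ * N1⁻¹ * (x j ^ 2) := fun j => by
      simp only [hxh]; ring
    rw [Finset.sum_congr rfl fun j _ => h1 j, ← Finset.mul_sum, ← hN1sq]
    field_simp
  have hxhy : ∑ j, xh j * y j = c1 := by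
    rw [hc1]
    exact Finset.sum_congr rfl fun j _ => mul_comm _ _
  have hrsum : ∑ j, r j ^ 2 = N2 ^ 2 - c1 ^ 2 := by
    have expand : ∀ j, r j ^ 2 = y j ^ 2 - 2 * c1 * (xh j * y j) + c1 ^ 2 * (xh j * xh j) := by
      intro j
      simp only [hrdef]
      ring
    rw [Finset.sum_congr rfl fun j _ => expand j, Finset.sum_add_distrib,
      Finset.sum_sub_distrib, ← Finset.mul_sum, ← Finset.mul_sum, hxhnorm, hxhy, hN2sq]
    ring
  have hc2nonneg : 0 ≤ c2 := Real.sqrt_nonneg _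
  have hrsumnonneg : (0:ℝ) ≤ ∑ j, r j ^ 2 := Finset.sum_nonneg fun j _ => sq_nonneg _
  have hc2sq : c2 ^ 2 = N2 ^ 2 - c1 ^ 2 := by
    rw [hc2def, Real.sq_sqrt hrsumnonneg, hrsum]
  have hc1le : c1 ^ 2 ≤ N2 ^ 2 := by nlinarith [hrsumnonneg, hrsum]
  have hipt : (∑ i, x i * y i) / (N1 * N2) = c1 / N2 := by
    have hxy : ∑ i, x i * y i = N1 * c1 := by
      rw [← hxhy, Finset.mul_sum]
      refine Finset.sum_congr rfl fun j _ => ?_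
      rw [hxhx j]
      ring
    rw [hxy]
    field_simp
  rw [hipt]
  set θ := Real.arccos (c1 / N2) with hθdef
  have ht1 : |c1 / N2| ≤ 1 := by
    rw [abs_div, abs_of_pos hN2, div_le_one hN2]
    nlinarith [abs_nonneg c1, sq_abs c1]
  have ht1' := abs_le.mp ht1
  have hθ0 : 0 ≤ θ := Real.arccos_nonneg _
  have hθπ : θ ≤ Real.pi := Real.arccos_le_pi _
  have hcosθ : Real.cos θ = c1 / N2 := Real.cos_arccos ht1'.1 ht1'.2
  have hsinθ : Real.sin θ = c2 / N2 := by
    rw [hθdef, Real.sin_arccos]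
    rw [show (1 - (c1/N2) ^ 2) = (c2/N2) ^ 2 by field_simp; nlinarith [hc2sq]]
    exact Real.sqrt_sq (by positivity)
  have hcosN : N2 * Real.cos θ = c1 := by rw [hcosθ]; field_simp
  have hsinN : N2 * Real.sin θ = c2 := by rw [hsinθ]; field_simp
  have MID : ∫ w, max (∑ i, w i * x i) 0 * max (∑ i, w i * y i) 0 ∂(stdGaussian d)
      = ∫ p : ℝ × ℝ, max (p.1 * N1) 0 * max (p.1 * c1 + p.2 * c2) 0
          ∂((ProbabilityTheory.gaussianReal 0 1).prod (ProbabilityTheory.gaussianReal 0 1)) := by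
    rcases lt_or_ge d 2 with hdlt | hdge
    · -- d = 1
      have hd1 : d = 1 := by omega
      subst hd1
      have hxh1 : xh 0 * xh 0 = 1 := by
        have := hxhnorm
        rwa [Fin.sum_univ_one] at this
      have hc10 : c1 = y 0 * xh 0 := by rw [hc1, Fin.sum_univ_one]
      have hr0 : ∀ j : Fin 1, r j = 0 := by
        intro j
        have hj0 : j = 0 := Subsingleton.elim _ _
        subst hj0
        simp only [hrdef]
        rw [hc10]
        linear_combination (-(y 0)) * hxh1
      have hc20 : c2 = 0 := by
        rw [hc2def]
        have : ∑ j : Fin 1, r j ^ 2 = 0 :=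
          Finset.sum_eq_zero fun j _ => by rw [hr0 j]; ring
        rw [this, Real.sqrt_zero]
      refine ReluAux.mid1 x y N1 c1 c2 (xh 0) hxh1 ?_ ?_ hc20
      · rw [mul_comm]
        linear_combination xh 0 * hxhx 0 + N1 * hxh1
      · rw [mul_comm, ← hc10]
    · -- d ≥ 2
      set i0 : Fin d := ⟨0, by omega⟩ with hi0
      set i1 : Fin d := ⟨1, by omega⟩ with hi1
      have hne : i0 ≠ i1 := by
        simp [hi0, hi1, Fin.ext_iff]
      obtain ⟨b, hb0, hb1⟩ : ∃ b : OrthonormalBasis (Fin d) ℝ (EuclideanSpace ℝ (Fin d)),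
          (∀ j, b i0 j = xh j) ∧ (∀ j, y j = c1 * b i0 j + c2 * b i1 j) :=
        ReluAux.exists_good_basis i0 i1 hne xh y r c1 c2 hxhnorm hxhy
          (fun j => by simp only [hrdef]) hc2def
      exact ReluAux.mid2 i0 i1 hne b x y N1 c1 c2
        (fun j => by rw [hb0 j]; exact hxhx j) hb1
  rw [MID]
  have hfinal : ∫ p : ℝ × ℝ, max (p.1 * N1) 0 * max (p.1 * c1 + p.2 * c2) 0
          ∂((ProbabilityTheory.gaussianReal 0 1).prod (ProbabilityTheory.gaussianReal 0 1))
      = (N1 * N2) * ∫ p : ℝ × ℝ, max p.1 0 * max (Real.cos θ * p.1 + Real.sin θ * p.2) 0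
          ∂((ProbabilityTheory.gaussianReal 0 1).prod (ProbabilityTheory.gaussianReal 0 1)) := by
    rw [← MeasureTheory.integral_const_mul]
    refine integral_congr_ae (Filter.Eventually.of_forall fun p => ?_)
    beta_reduce
    have hy2 : p.1 * c1 + p.2 * c2 = N2 * (Real.cos θ * p.1 + Real.sin θ * p.2) := by
      rw [← hcosN, ← hsinN]; ring
    have m1 : max (p.1 * N1) 0 = N1 * max p.1 0 := by
      rw [mul_max_of_nonneg _ _ hN1.le, mul_zero, mul_comm]
    have m2 : max (N2 * (Real.cos θ * p.1 + Real.sin θ * p.2)) 0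
        = N2 * max (Real.cos θ * p.1 + Real.sin θ * p.2) 0 := by
      rw [mul_max_of_nonneg _ _ hN2.le, mul_zero]
    rw [hy2, m1, m2]
    ring
  rw [hfinal, ReluAux.key2d hθ0 hθπ]
  field_simp
end

section
/- Let d ≥ 1, let γ be the standard Gaussian measure on ℝ^d, and let a, b ∈ ℝ^d. Then ∫ erf′(⟨a,z⟩) · erf′(⟨b,z⟩) dγ(z) = (4/π) · ( (1 + 2‖a‖₂²)(1 + 2‖b‖₂²) − 4⟨a,b⟩² )^{−1/2}, where erf′(x) = (2/√π) e^{−x²} is the derivative of the error function. Equivalently, with Σ = [[⟨a,a⟩, ⟨a,b⟩],[⟨a,b⟩, ⟨b,b⟩]], the integral equals (4/π) det(I₂ + 2Σ)^{−1/2}. -/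
open MeasureTheory Matrix

/-- The derivative of the error function: `erf′(x) = (2/√π) e^{−x²}`. -/
noncomputable def erfDeriv (x : ℝ) : ℝ :=
  (2 / Real.sqrt Real.pi) * Real.exp (-(x ^ 2))

section Auxiliary

open Complex ProbabilityTheory MeasureTheory.Measure Filter

instance (d : ℕ) : IsProbabilityMeasure (stdGaussian d) := by
  unfold _root_.stdGaussian; infer_instance

private lemma cpow_half (r : ℝ) (h : 0 ≤ r) : (r : ℂ) ^ (1/2 : ℂ) = ((Real.sqrt r : ℝ) : ℂ) := by
  rw [Real.sqrt_eq_rpow, Complex.ofReal_cpow h]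
  norm_num

private lemma char1 (w : ℝ) :
    ∫ x : ℝ, Complex.exp (Complex.I * w * x) ∂(gaussianReal 0 1) =
      Complex.exp (-(w ^ 2) / 2) := by
  rw [gaussianReal_of_var_ne_zero _ one_ne_zero]
  have hmeas : Measurable fun x => Real.toNNReal (gaussianPDFReal 0 1 x) :=
    (measurable_gaussianPDFReal 0 1).real_toNNReal
  have hpdf : gaussianPDF 0 1 = fun x => ((fun y => Real.toNNReal (gaussianPDFReal 0 1 y)) x : ENNReal) := rfl
  rw [hpdf, integral_withDensity_eq_integral_smul hmeas]
  have hpt : ∀ x : ℝ, (Real.toNNReal (gaussianPDFReal 0 1 x)) • Complex.exp (Complex.I * w * x)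
      = ((Real.sqrt (2 * Real.pi))⁻¹ : ℂ) *
        Complex.exp ((-(1/2) : ℂ) * x ^ 2 + (Complex.I * w) * x + 0) := by
    intro x
    have h0 : (0:ℝ) ≤ gaussianPDFReal 0 1 x := gaussianPDFReal_nonneg 0 1 x
    rw [NNReal.smul_def, Real.coe_toNNReal _ h0, Complex.real_smul]
    simp only [gaussianPDFReal, mul_one, sub_zero]
    rw [Complex.ofReal_mul, Complex.ofReal_exp, mul_assoc, ← Complex.exp_add]
    congr 1
    · push_cast; ring
    · push_cast; ring
  simp only [hpt]
  rw [integral_const_mul, integral_cexp_quadratic (by norm_num : ((-(1/2):ℂ)).re < 0)]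
  have h1 : ((Real.pi : ℂ) / -(-(1/2))) ^ (1/2 : ℂ) = ((Real.sqrt (2 * Real.pi) : ℝ) : ℂ) := by
    rw [neg_neg, show ((Real.pi : ℂ) / (1/2)) = ((2 * Real.pi : ℝ) : ℂ) by push_cast; ring,
      cpow_half _ (by positivity)]
  rw [h1]
  have h2 : (0 : ℂ) - (Complex.I * w) ^ 2 / (4 * (-(1/2))) = -(w^2)/2 := by
    rw [mul_pow, Complex.I_sq]; push_cast; ring
  rw [h2, ← mul_assoc, inv_mul_cancel₀
    (by simp only [ne_eq, Complex.ofReal_eq_zero]; positivity), one_mul]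

private lemma integral_pi_prod (μ : Measure ℝ) [SigmaFinite μ] :
    ∀ (n : ℕ) (f : Fin n → ℝ → ℂ),
    ∫ x : Fin n → ℝ, ∏ i, f i (x i) ∂(Measure.pi fun _ => μ) = ∏ i, ∫ x, f i x ∂μ := by
  intro n
  induction n with
  | zero =>
      intro f
      simp only [Finset.univ_eq_empty, Finset.prod_empty, integral_const,
        measureReal_def, pi_empty_univ, ENNReal.toReal_one, one_smul]
  | succ n n_ih =>
      intro f
      calc
        _ = ∫ x : ℝ × (Fin n → ℝ),
            f 0 x.1 * ∏ i : Fin n, f (Fin.succ i) (x.2 i) ∂(μ.prod (Measure.pi fun _ => μ)) := by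
          rw [← ((measurePreserving_piFinSuccAbove
            (fun _ : Fin (n+1) => μ) 0).symm).integral_comp']
          simp_rw [MeasurableEquiv.piFinSuccAbove_symm_apply, Fin.insertNthEquiv,
            Fin.prod_univ_succ, Fin.insertNth_zero, Equiv.coe_fn_mk, Fin.cons_succ,
            Fin.cons_zero]
          rfl
        _ = (∫ x, f 0 x ∂μ) * ∏ i : Fin n, ∫ x, f (Fin.succ i) x ∂μ := by
          rw [← n_ih, ← integral_prod_mul]
        _ = ∏ i, ∫ x, f i x ∂μ := by rw [Fin.prod_univ_succ]

private lemma charD (d : ℕ) (w : Fin d → ℝ) :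
    ∫ z, Complex.exp (Complex.I * (∑ i, w i * z i)) ∂(stdGaussian d) =
      Complex.exp (-(∑ i, (w i)^2 : ℝ) / 2) := by
  have h1 : ∀ z : Fin d → ℝ, Complex.exp (Complex.I * (∑ i, w i * z i))
      = ∏ i, Complex.exp (Complex.I * (w i) * (z i)) := by
    intro z
    rw [← Complex.exp_sum]
    congr 1
    push_cast
    rw [Finset.mul_sum]
    exact Finset.sum_congr rfl fun i _ => by ring
  simp_rw [h1]
  rw [_root_.stdGaussian, integral_pi_prod (gaussianReal 0 1) d
    (fun i x => Complex.exp (Complex.I * w i * x))]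
  simp_rw [char1]
  rw [← Complex.exp_sum]
  congr 1
  push_cast
  rw [← Finset.sum_div, ← Finset.sum_neg_distrib]

private lemma oneD (x : ℝ) :
    ∫ s : ℝ, Complex.exp ((-(s^2)/4 : ℝ) + Complex.I * (s * x)) =
      ((Real.sqrt (4 * Real.pi) : ℝ) : ℂ) * Complex.exp (-(x^2 : ℝ)) := by
  have h : ∀ s : ℝ, ((-(s^2)/4 : ℝ) : ℂ) + Complex.I * (s * x)
      = (-(1/4) : ℂ) * s ^ 2 + (Complex.I * x) * s + 0 := by
    intro s; push_cast; ring
  simp_rw [h]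
  rw [integral_cexp_quadratic (by norm_num : ((-(1/4):ℂ)).re < 0)]
  congr 1
  · rw [show ((Real.pi : ℂ) / -(-(1/4))) = ((4 * Real.pi : ℝ) : ℂ) by push_cast; ring,
      cpow_half _ (by positivity)]
  · congr 1
    rw [mul_pow, Complex.I_sq]
    push_cast; ring

private lemma stepA (u v : ℝ) :
    ∫ q : ℝ × ℝ, Complex.exp ((-(q.1^2)/4 - (q.2^2)/4 : ℝ) +
        Complex.I * (q.1 * u + q.2 * v)) ∂((volume : Measure ℝ).prod volume) =
      ((4 * Real.pi : ℝ) : ℂ) * Complex.exp ((-(u^2) - v^2 : ℝ)) := by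
  have h : ∀ q : ℝ × ℝ, Complex.exp ((-(q.1^2)/4 - (q.2^2)/4 : ℝ) +
        Complex.I * (q.1 * u + q.2 * v))
      = (fun s => Complex.exp ((-(s^2)/4 : ℝ) + Complex.I * (s * u))) q.1 *
        (fun t => Complex.exp ((-(t^2)/4 : ℝ) + Complex.I * (t * v))) q.2 := by
    intro q
    rw [← Complex.exp_add]
    congr 1
    push_cast; ring
  simp_rw [h]
  rw [integral_prod_mul (f := fun s : ℝ => Complex.exp ((-(s^2)/4 : ℝ) + Complex.I * (s * u)))
    (g := fun t : ℝ => Complex.exp ((-(t^2)/4 : ℝ) + Complex.I * (t * v))), oneD, oneD]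
  have h4 : ((Real.sqrt (4 * Real.pi) : ℝ) : ℂ) * ((Real.sqrt (4 * Real.pi) : ℝ) : ℂ)
      = ((4 * Real.pi : ℝ) : ℂ) := by
    rw [← Complex.ofReal_mul, Real.mul_self_sqrt (by positivity)]
  calc (((Real.sqrt (4*Real.pi) : ℝ):ℂ) * Complex.exp (-(u^2:ℝ))) *
        (((Real.sqrt (4*Real.pi) : ℝ):ℂ) * Complex.exp (-(v^2:ℝ)))
      = (((Real.sqrt (4*Real.pi) : ℝ):ℂ) * ((Real.sqrt (4*Real.pi) : ℝ):ℂ)) *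
        (Complex.exp (-(u^2:ℝ)) * Complex.exp (-(v^2:ℝ))) := by ring
    _ = ((4 * Real.pi : ℝ) : ℂ) * Complex.exp ((-(u^2) - v^2 : ℝ)) := by
        rw [h4, ← Complex.exp_add]
        congr 1
        push_cast
        ring

private lemma stepE (al be C : ℝ) (hbe : 0 < be) (hE : 0 < al - C^2/(4*be))
    (hInt : Integrable (fun q : ℝ × ℝ =>
        Complex.exp ((-(al*q.1^2) - C*(q.1*q.2) - be*q.2^2 : ℝ))) ((volume : Measure ℝ).prod volume)) :
    ∫ q : ℝ × ℝ, Complex.exp ((-(al*q.1^2) - C*(q.1*q.2) - be*q.2^2 : ℝ))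
        ∂((volume : Measure ℝ).prod volume)
      = ((Real.sqrt (Real.pi^2 / (al*be - C^2/4)) : ℝ) : ℂ) := by
  set E' : ℝ := al - C^2/(4*be) with hE'
  rw [integral_prod _ hInt]
  have h1 : ∀ s t : ℝ, ((-(al*s^2) - C*(s*t) - be*t^2 : ℝ) : ℂ)
      = (-(be:ℂ)) * t^2 + (-(C:ℂ)*s) * t + (-(al:ℂ) * s^2) := by
    intro s t; push_cast; ring
  simp_rw [h1]
  have hbe' : ((-(be:ℂ))).re < 0 := by simpa using hbe
  simp_rw [integral_cexp_quadratic hbe' _ _]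
  have h2 : ∀ s : ℝ, (-(al:ℂ) * s^2 - (-(C:ℂ)*s)^2 / (4 * (-(be:ℂ))))
      = (-(E':ℂ)) * s^2 + 0 * s + 0 := by
    intro s
    have hbne : (be:ℂ) ≠ 0 := Complex.ofReal_ne_zero.mpr hbe.ne'
    rw [hE']
    push_cast
    field_simp
    ring
  simp_rw [h2, integral_const_mul]
  have hE2 : ((-(E':ℂ))).re < 0 := by simpa using hE
  rw [integral_cexp_quadratic hE2]
  have h3 : ((Real.pi : ℂ) / -(-(be:ℂ))) = ((Real.pi / be : ℝ) : ℂ) := by push_cast; ring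
  have h4 : ((Real.pi : ℂ) / -(-(E':ℂ))) = ((Real.pi / E' : ℝ) : ℂ) := by push_cast; ring
  rw [h3, h4, cpow_half _ (by positivity), cpow_half _ (by positivity)]
  have h5 : (0:ℂ) - 0^2/(4 * (-(E':ℂ))) = 0 := by ring
  rw [h5, Complex.exp_zero, mul_one, ← Complex.ofReal_mul,
    ← Real.sqrt_mul (by positivity)]
  congr 2
  rw [div_mul_div_comm, ← sq]
  congr 1
  field_simp [hE']
  have hx : C^2/(4*be) * (4*be) = C^2 := div_mul_cancel₀ (C^2) (by positivity)
  rw [hE']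
  linear_combination -hx

private lemma stepD (d : ℕ) (a b : Fin d → ℝ) (q : ℝ × ℝ) (al be : ℝ)
    (hal' : al = 1/4 + (∑ i, a i ^ 2)/2) (hbe' : be = 1/4 + (∑ i, b i ^ 2)/2) :
    ∫ z, Complex.exp ((-(q.1^2)/4 - (q.2^2)/4 : ℝ) +
      Complex.I * (q.1 * (∑ i, a i * z i) + q.2 * (∑ i, b i * z i))) ∂(stdGaussian d)
      = Complex.exp ((-(al*q.1^2) - (∑ i, a i * b i)*(q.1*q.2) - be*q.2^2 : ℝ)) := by
  have hre : ∀ z : Fin d → ℝ,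
      q.1 * (∑ i, a i * z i) + q.2 * (∑ i, b i * z i)
        = ∑ i, (q.1 * a i + q.2 * b i) * z i := by
    intro z
    rw [Finset.mul_sum, Finset.mul_sum, ← Finset.sum_add_distrib]
    exact Finset.sum_congr rfl fun i _ => by ring
  have hsum : ∑ i, (q.1 * a i + q.2 * b i)^2
      = q.1^2 * (∑ i, a i ^ 2) + 2*q.1*q.2*(∑ i, a i * b i) + q.2^2*(∑ i, b i ^ 2) := by
    have h1 : ∀ i ∈ Finset.univ, (q.1 * a i + q.2 * b i)^2
        = q.1^2 * (a i)^2 + (2*q.1*q.2) * (a i * b i) + q.2^2 * (b i)^2 := fun i _ => by ring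
    rw [Finset.sum_congr rfl h1, Finset.sum_add_distrib, Finset.sum_add_distrib,
      ← Finset.mul_sum, ← Finset.mul_sum, ← Finset.mul_sum]
  have hsplit : ∀ z : Fin d → ℝ, Complex.exp ((-(q.1^2)/4 - (q.2^2)/4 : ℝ) +
        Complex.I * (q.1 * (∑ i, a i * z i) + q.2 * (∑ i, b i * z i)))
      = Complex.exp ((-(q.1^2)/4 - (q.2^2)/4 : ℝ)) *
        Complex.exp (Complex.I * (∑ i, (q.1 * a i + q.2 * b i) * z i)) := by
    intro z
    rw [← Complex.exp_add]
    congr 1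
    rw [← hre z]
    push_cast
    ring
  simp_rw [hsplit]
  rw [integral_const_mul, charD d (fun i => q.1 * a i + q.2 * b i), ← Complex.exp_add]
  congr 1
  rw [hsum]
  push_cast [hal', hbe']
  ring

set_option maxHeartbeats 1000000 in
private lemma key (d : ℕ) (a b : Fin d → ℝ) :
    ∫ z, Real.exp (-(∑ i, a i * z i)^2 - (∑ i, b i * z i)^2) ∂(stdGaussian d) =
      (Real.sqrt ((1 + 2 * ∑ i, a i ^ 2) * (1 + 2 * ∑ i, b i ^ 2) -
        4 * (∑ i, a i * b i) ^ 2))⁻¹ := by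
  have hA0 : (0:ℝ) ≤ ∑ i, a i ^ 2 := Finset.sum_nonneg fun i _ => sq_nonneg _
  have hB0 : (0:ℝ) ≤ ∑ i, b i ^ 2 := Finset.sum_nonneg fun i _ => sq_nonneg _
  have hCS : (∑ i, a i * b i)^2 ≤ (∑ i, a i ^ 2) * (∑ i, b i ^ 2) :=
    Finset.sum_mul_sq_le_sq_mul_sq _ _ _
  set Δ : ℝ := (1 + 2 * ∑ i, a i ^ 2) * (1 + 2 * ∑ i, b i ^ 2) - 4 * (∑ i, a i * b i)^2 with hΔ
  have hΔ1 : 1 ≤ Δ := by rw [hΔ]; nlinarith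
  have hΔ0 : 0 < Δ := lt_of_lt_of_le one_pos hΔ1
  set al : ℝ := 1/4 + (∑ i, a i ^ 2)/2 with hal'
  set be : ℝ := 1/4 + (∑ i, b i ^ 2)/2 with hbe'
  set C : ℝ := ∑ i, a i * b i with hC
  have hal0 : 0 < al := by rw [hal']; positivity
  have hbe0 : 0 < be := by rw [hbe']; positivity
  have hE : 0 < al - C^2/(4*be) := by
    rw [sub_pos, div_lt_iff₀ (by positivity)]
    rw [hal', hbe', hC]
    nlinarith
  -- continuity
  have hcu : Continuous (fun z : Fin d → ℝ => ∑ i, a i * z i) :=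
    continuous_finset_sum _ fun i _ => continuous_const.mul (continuous_apply i)
  have hcv : Continuous (fun z : Fin d → ℝ => ∑ i, b i * z i) :=
    continuous_finset_sum _ fun i _ => continuous_const.mul (continuous_apply i)
  have hcont : Continuous (fun p : (Fin d → ℝ) × (ℝ × ℝ) =>
      Complex.exp ((-(p.2.1^2)/4 - (p.2.2^2)/4 : ℝ) +
        Complex.I * (p.2.1 * (∑ i, a i * p.1 i) + p.2.2 * (∑ i, b i * p.1 i)))) := by
    apply Complex.continuous_exp.comp
    apply Continuous.add
    · exact Complex.continuous_ofReal.comp (by fun_prop)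
    · apply continuous_const.mul
      exact ((Complex.continuous_ofReal.comp continuous_snd.fst).mul
          (Complex.continuous_ofReal.comp (hcu.comp continuous_fst))).add
        ((Complex.continuous_ofReal.comp continuous_snd.snd).mul
          (Complex.continuous_ofReal.comp (hcv.comp continuous_fst)))
  -- norm
  have hnorm : ∀ (p : (Fin d → ℝ) × (ℝ × ℝ)),
      ‖Complex.exp ((-(p.2.1^2)/4 - (p.2.2^2)/4 : ℝ) +
        Complex.I * (p.2.1 * (∑ i, a i * p.1 i) + p.2.2 * (∑ i, b i * p.1 i)))‖
        = Real.exp (-(p.2.1^2)/4) * Real.exp (-(p.2.2^2)/4) := by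
    intro p
    rw [Complex.norm_exp, ← Real.exp_add]
    congr 1
    simp [← Complex.ofReal_pow]
    ring
  -- integrability of the bound
  have h14 : Integrable (fun s : ℝ => Real.exp (-(s^2)/4)) := by
    have h := integrable_exp_neg_mul_sq (by norm_num : (0:ℝ) < 1/4)
    have he : (fun s : ℝ => Real.exp (-(s^2)/4)) = fun s => Real.exp (-(1/4 : ℝ) * s^2) := by
      funext s; ring_nf
    rw [he]; exact h
  have hg2 : Integrable (fun q : ℝ × ℝ => Real.exp (-(q.1^2)/4) * Real.exp (-(q.2^2)/4))
      ((volume : Measure ℝ).prod volume) := h14.mul_prod h14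
  have hg : Integrable (fun p : (Fin d → ℝ) × (ℝ × ℝ) =>
      Real.exp (-(p.2.1^2)/4) * Real.exp (-(p.2.2^2)/4))
      ((stdGaussian d).prod ((volume : Measure ℝ).prod volume)) := by
    have h1 := (integrable_const (μ := stdGaussian d) (1:ℝ)).mul_prod hg2
    simpa using h1
  have hF : Integrable (Function.uncurry (fun (z : Fin d → ℝ) (q : ℝ × ℝ) =>
      Complex.exp ((-(q.1^2)/4 - (q.2^2)/4 : ℝ) +
        Complex.I * (q.1 * (∑ i, a i * z i) + q.2 * (∑ i, b i * z i)))))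
      ((stdGaussian d).prod ((volume : Measure ℝ).prod volume)) := by
    apply Integrable.mono' hg (hcont.aestronglyMeasurable)
    exact Eventually.of_forall fun p => le_of_eq (hnorm p)
  -- main computation
  have main : ((4 * Real.pi : ℝ) : ℂ) *
      ((∫ z, Real.exp (-(∑ i, a i * z i)^2 - (∑ i, b i * z i)^2) ∂(stdGaussian d) : ℝ) : ℂ)
      = ((4 * Real.pi : ℝ) : ℂ) * (((Real.sqrt Δ)⁻¹ : ℝ) : ℂ) := by
    have lhs1 : ((4 * Real.pi : ℝ) : ℂ) *
        ((∫ z, Real.exp (-(∑ i, a i * z i)^2 - (∑ i, b i * z i)^2) ∂(stdGaussian d) : ℝ) : ℂ)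
        = ∫ z, ((4 * Real.pi : ℝ) : ℂ) *
            Complex.exp ((-(∑ i, a i * z i)^2 - (∑ i, b i * z i)^2 : ℝ)) ∂(stdGaussian d) := by
      rw [integral_const_mul]
      congr 1
      simp_rw [← Complex.ofReal_exp]
      exact (integral_ofReal (𝕜 := ℂ)).symm
    rw [lhs1]
    have lhs2 : ∀ z : Fin d → ℝ, ((4 * Real.pi : ℝ) : ℂ) *
        Complex.exp ((-(∑ i, a i * z i)^2 - (∑ i, b i * z i)^2 : ℝ))
        = ∫ q : ℝ × ℝ, Complex.exp ((-(q.1^2)/4 - (q.2^2)/4 : ℝ) +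
            Complex.I * (q.1 * (∑ i, a i * z i) + q.2 * (∑ i, b i * z i)))
            ∂((volume : Measure ℝ).prod volume) :=
      fun z => (stepA (∑ i, a i * z i) (∑ i, b i * z i)).symm
    simp_rw [lhs2]
    rw [integral_integral_swap hF]
    have hD : ∀ q : ℝ × ℝ, ∫ z, Complex.exp ((-(q.1^2)/4 - (q.2^2)/4 : ℝ) +
        Complex.I * (q.1 * (∑ i, a i * z i) + q.2 * (∑ i, b i * z i))) ∂(stdGaussian d)
        = Complex.exp ((-(al*q.1^2) - C*(q.1*q.2) - be*q.2^2 : ℝ)) :=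
      fun q => stepD d a b q al be hal' hbe'
    simp_rw [hD]
    have hInt2 : Integrable (fun q : ℝ × ℝ =>
        Complex.exp ((-(al*q.1^2) - C*(q.1*q.2) - be*q.2^2 : ℝ)))
        ((volume : Measure ℝ).prod volume) := by
      have h2 := hF.integral_prod_right
      exact h2.congr (Eventually.of_forall fun q => hD q)
    rw [stepE al be C hbe0 hE hInt2]
    have halg : Real.sqrt (Real.pi^2 / (al*be - C^2/4)) = 4 * Real.pi * (Real.sqrt Δ)⁻¹ := by
      have h1 : al * be - C^2/4 = Δ / 16 := by rw [hal', hbe', hΔ, hC]; ring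
      rw [h1, div_div_eq_mul_div, Real.sqrt_div (by positivity), ← div_eq_mul_inv,
        div_eq_mul_inv (Real.sqrt _)]
      congr 1
      have h16 : Real.pi ^ 2 * 16 = (4 * Real.pi)^2 := by ring
      rw [h16, Real.sqrt_sq (by positivity)]
    rw [halg]
    push_cast
    ring
  have h4π : ((4 * Real.pi : ℝ) : ℂ) ≠ 0 := by
    simp only [ne_eq, Complex.ofReal_eq_zero]
    positivity
  have hfin := mul_left_cancel₀ h4π main
  exact_mod_cast hfin

end Auxiliary

/-- The erf-derivative kernel: for `a, b ∈ ℝ^d`,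
`∫ erf′(⟨a,z⟩) erf′(⟨b,z⟩) dγ(z) = (4/π)((1+2‖a‖²)(1+2‖b‖²) − 4⟨a,b⟩²)^{−1/2}`;
equivalently, with `Σ = [[⟨a,a⟩,⟨a,b⟩],[⟨a,b⟩,⟨b,b⟩]]`, it equals
`(4/π) det(I₂ + 2Σ)^{−1/2}`. -/
theorem erf_derivative_kernel (d : ℕ) (hd : 1 ≤ d) (a b : Fin d → ℝ) :
    (∫ z, erfDeriv (∑ i, a i * z i) * erfDeriv (∑ i, b i * z i) ∂(stdGaussian d) =
      (4 / Real.pi) *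
        (Real.sqrt ((1 + 2 * ∑ i, a i ^ 2) * (1 + 2 * ∑ i, b i ^ 2) -
          4 * (∑ i, a i * b i) ^ 2))⁻¹) ∧
    (∫ z, erfDeriv (∑ i, a i * z i) * erfDeriv (∑ i, b i * z i) ∂(stdGaussian d) =
      (4 / Real.pi) *
        (Real.sqrt
          ((1 + (2 : ℝ) • (!![∑ i, a i * a i, ∑ i, a i * b i;
              ∑ i, a i * b i, ∑ i, b i * b i] : Matrix (Fin 2) (Fin 2) ℝ)).det))⁻¹) := by
  have h1 : ∫ z, erfDeriv (∑ i, a i * z i) * erfDeriv (∑ i, b i * z i) ∂(stdGaussian d) =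
      (4 / Real.pi) *
        (Real.sqrt ((1 + 2 * ∑ i, a i ^ 2) * (1 + 2 * ∑ i, b i ^ 2) -
          4 * (∑ i, a i * b i) ^ 2))⁻¹ := by
    have hpt : ∀ z : Fin d → ℝ, erfDeriv (∑ i, a i * z i) * erfDeriv (∑ i, b i * z i)
        = (4 / Real.pi) * Real.exp (-(∑ i, a i * z i)^2 - (∑ i, b i * z i)^2) := by
      intro z
      unfold erfDeriv
      have h2 : (2 / Real.sqrt Real.pi) * (2 / Real.sqrt Real.pi) = 4 / Real.pi := by
        rw [div_mul_div_comm, Real.mul_self_sqrt Real.pi_pos.le]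
        norm_num
      calc (2 / Real.sqrt Real.pi * Real.exp (-(∑ i, a i * z i)^2)) *
            (2 / Real.sqrt Real.pi * Real.exp (-(∑ i, b i * z i)^2))
          = ((2 / Real.sqrt Real.pi) * (2 / Real.sqrt Real.pi)) *
            (Real.exp (-(∑ i, a i * z i)^2) * Real.exp (-(∑ i, b i * z i)^2)) := by ring
        _ = (4 / Real.pi) * Real.exp (-(∑ i, a i * z i)^2 - (∑ i, b i * z i)^2) := by
            rw [h2, ← Real.exp_add]
            congr 1
    simp_rw [hpt]
    rw [integral_const_mul, key d a b]
  refine ⟨h1, ?_⟩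
  rw [h1]
  congr 2
  rw [Matrix.det_fin_two]
  simp [Matrix.one_apply]
  congr 1
  have ha2 : ∑ i, a i * a i = ∑ i, a i ^ 2 := Finset.sum_congr rfl fun i _ => (pow_two (a i)).symm
  have hb2 : ∑ i, b i * b i = ∑ i, b i ^ 2 := Finset.sum_congr rfl fun i _ => (pow_two (b i)).symm
  rw [ha2, hb2]
  ring
end
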